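/- Let n and N be positive integers, let C ∈ M_n be a correlation matrix, and let Φ : M_n → M_n be the Schur channel defined by Φ(X) = C ⊙ X for every X ∈ M_n. Then the following are equivalent: (1) Φ is mixed unitary with mixed-unitary rank equal to N; (2) C is toroidal with toroidal rank equal to N. -/

import Mathlib

open scoped Kronecker ComplexOrder
open Matrix

/-- Square complex matrices indexed by `α`. -/
abbrev Mat (α : Type*) := Matrix α α ℂ

/-- The Choi matrix `J(Φ) = ∑_{j,k} Φ(E_{j,k}) ⊗ E_{j,k}` of a linear map between
matrix spaces. -/
noncomputable def choiMatrix {α β : Type*} [Fintype α] [DecidableEq α]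
    (Φ : Mat α →ₗ[ℂ] Mat β) : Matrix (β × α) (β × α) ℂ :=
  ∑ j : α, ∑ k : α, (Φ (Matrix.single j k 1)) ⊗ₖ (Matrix.single j k 1)

/-- The Choi rank of a linear map: the rank of its Choi matrix. -/
noncomputable def choiRank {α β : Type*} [Fintype α] [DecidableEq α] [Fintype β]
    (Φ : Mat α →ₗ[ℂ] Mat β) : ℕ :=
  (choiMatrix Φ).rank

/-- `A` is a Kraus representation of `Φ` (with the trace-preservation condition). -/
def IsKrausRep {α β : Type*} [Fintype α] [DecidableEq α] [Fintype β] {r : ℕ}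
    (Φ : Mat α →ₗ[ℂ] Mat β) (A : Fin r → Matrix β α ℂ) : Prop :=
  (∀ X, Φ X = ∑ k, A k * X * (A k)ᴴ) ∧ (∑ k, (A k)ᴴ * A k = 1)

/-- A quantum channel: a linear map admitting a Kraus representation
`Φ(X) = ∑ₖ Aₖ X Aₖ*` with `∑ₖ Aₖ* Aₖ = 1`. -/
def IsChannel {α β : Type*} [Fintype α] [DecidableEq α] [Fintype β]
    (Φ : Mat α →ₗ[ℂ] Mat β) : Prop :=
  ∃ (r : ℕ) (A : Fin r → Matrix β α ℂ), IsKrausRep Φ A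

/-- The dimension of the operator system `span{Aⱼᴴ Aₖ}` generated by a Kraus family. -/
noncomputable def krausOpSystemDim {α β : Type*} [Fintype α] [Fintype β] {r : ℕ}
    (A : Fin r → Matrix β α ℂ) : ℕ :=
  Module.finrank ℂ (Submodule.span ℂ {M : Mat α | ∃ j k, M = (A j)ᴴ * A k})

/-- A mixed-unitary decomposition of `Φ` with `N` terms: a probability vector `p`
and unitaries `U` with `Φ(X) = ∑ₖ pₖ Uₖ X Uₖ*`. -/
def IsMixedUnitaryDecomp {α : Type*} [Fintype α] [DecidableEq α] {N : ℕ}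
    (Φ : Mat α →ₗ[ℂ] Mat α) (p : Fin N → ℝ) (U : Fin N → Mat α) : Prop :=
  (∀ k, 0 ≤ p k) ∧ (∑ k, p k = 1) ∧ (∀ k, U k ∈ Matrix.unitaryGroup α ℂ) ∧
    (∀ X, Φ X = ∑ k, (p k : ℂ) • (U k * X * (U k)ᴴ))

/-- `Φ` is a mixed-unitary channel. -/
def IsMixedUnitary {α : Type*} [Fintype α] [DecidableEq α]
    (Φ : Mat α →ₗ[ℂ] Mat α) : Prop :=
  ∃ (N : ℕ) (p : Fin N → ℝ) (U : Fin N → Mat α), IsMixedUnitaryDecomp Φ p U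

/-- The mixed-unitary rank: the minimum number of unitary conjugations in a
mixed-unitary decomposition. -/
noncomputable def mixedUnitaryRank {α : Type*} [Fintype α] [DecidableEq α]
    (Φ : Mat α →ₗ[ℂ] Mat α) : ℕ :=
  sInf {N : ℕ | ∃ (p : Fin N → ℝ) (U : Fin N → Mat α), IsMixedUnitaryDecomp Φ p U}

/-- A mixed-unitary decomposition is the *unique* mixed-unitary decomposition of `Φ` if
every other mixed-unitary decomposition of `Φ` arises by partitioning its terms into
groups of phase-multiples of the `Uₖ` with matching total probabilities. -/
def IsUniqueMixedUnitaryDecomp {α : Type*} [Fintype α] [DecidableEq α] {N : ℕ}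
    (Φ : Mat α →ₗ[ℂ] Mat α) (p : Fin N → ℝ) (U : Fin N → Mat α) : Prop :=
  IsMixedUnitaryDecomp Φ p U ∧
    ∀ (t : ℕ) (q : Fin t → ℝ) (V : Fin t → Mat α), IsMixedUnitaryDecomp Φ q V →
      ∃ T : Fin t → Fin N,
        (∀ j, ∃ c : ℂ, ‖c‖ = 1 ∧ V j = c • U (T j)) ∧
        (∀ k, p k = ∑ j ∈ Finset.univ.filter (fun j => T j = k), q j)

/-- `Φ` possesses a unique mixed-unitary decomposition. -/
def HasUniqueMixedUnitaryDecomp {α : Type*} [Fintype α] [DecidableEq α]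
    (Φ : Mat α →ₗ[ℂ] Mat α) : Prop :=
  ∃ (N : ℕ) (p : Fin N → ℝ) (U : Fin N → Mat α), IsUniqueMixedUnitaryDecomp Φ p U

/-- `Ψ : M_α → M_N` is complementary to `Φ : M_α → M_α`: there is a Kraus representation
`Φ(X) = ∑ₖ Bₖ X Bₖ*` with `N` terms such that `Ψ(X)` has `(j,k)` entry `⟨Bₖ* Bⱼ, X⟩`. -/
def IsComplementary {α : Type*} [Fintype α] [DecidableEq α] {N : ℕ}
    (Φ : Mat α →ₗ[ℂ] Mat α) (Ψ : Mat α →ₗ[ℂ] Mat (Fin N)) : Prop :=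
  ∃ B : Fin N → Mat α, IsKrausRep Φ B ∧
    ∀ X, Ψ X = Matrix.of fun j k => ((((B k)ᴴ * B j)ᴴ) * X).trace

/-- A unitary channel: conjugation by a fixed unitary matrix. -/
def IsUnitaryChannel {α : Type*} [Fintype α] [DecidableEq α]
    (Ψ : Mat α →ₗ[ℂ] Mat α) : Prop :=
  ∃ U ∈ Matrix.unitaryGroup α ℂ, ∀ X, Ψ X = U * X * Uᴴ

/-- A correlation matrix: positive semidefinite with unit diagonal. -/
def IsCorrelation {α : Type*} [Fintype α] (C : Mat α) : Prop :=
  C.PosSemidef ∧ ∀ i, C i i = 1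

/-- A toroidal decomposition of `C` with `N` terms: `C = ∑ₖ pₖ uₖ uₖ*` where each `uₖ`
has all entries of modulus one. -/
def IsToroidalDecomp {α : Type*} [Fintype α] {N : ℕ}
    (C : Mat α) (p : Fin N → ℝ) (u : Fin N → α → ℂ) : Prop :=
  (∀ k, 0 ≤ p k) ∧ (∑ k, p k = 1) ∧ (∀ k i, ‖u k i‖ = 1) ∧
    C = ∑ k, (p k : ℂ) • Matrix.vecMulVec (u k) (star (u k))

/-- A correlation matrix is toroidal if it is a convex combination of rank-one
correlation matrices `u u*` with `u` having unimodular entries. -/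
def IsToroidal {α : Type*} [Fintype α] (C : Mat α) : Prop :=
  ∃ (N : ℕ) (p : Fin N → ℝ) (u : Fin N → α → ℂ), IsToroidalDecomp C p u

/-- The toroidal rank of a correlation matrix. -/
noncomputable def toroidalRank {α : Type*} [Fintype α] (C : Mat α) : ℕ :=
  sInf {N : ℕ | ∃ (p : Fin N → ℝ) (u : Fin N → α → ℂ), IsToroidalDecomp C p u}


open scoped Classical in
private lemma aux_diag_conj {n : ℕ} (u : Fin n → ℂ) (X : Mat (Fin n)) (i j : Fin n) :
    (Matrix.diagonal u * X * (Matrix.diagonal u)ᴴ) i j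
      = u i * (starRingEnd ℂ) (u j) * X i j := by
  simp [Matrix.diagonal_conjTranspose, Matrix.mul_diagonal, Matrix.diagonal_mul]
  ring

private lemma aux_conj_std {n : ℕ} (U : Mat (Fin n)) (i j : Fin n) :
    (U * Matrix.single i i (1:ℂ) * Uᴴ) j j
      = U j i * (starRingEnd ℂ) (U j i) := by
  simp [Matrix.mul_apply, Matrix.single, ite_and, Finset.sum_ite_eq, Finset.mul_sum]

private lemma aux_norm_diag {n : ℕ} (U : Mat (Fin n))
    (h : U ∈ Matrix.unitaryGroup (Fin n) ℂ) (i : Fin n)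
    (hd : ∀ j, j ≠ i → U j i = 0) : ‖U i i‖ = 1 := by
  have h1 : Uᴴ * U = 1 := by
    simpa [Matrix.star_eq_conjTranspose] using Matrix.mem_unitaryGroup_iff'.mp h
  have h2 := congrFun (congrFun h1 i) i
  rw [Matrix.mul_apply] at h2
  have h3 : (starRingEnd ℂ) (U i i) * U i i = 1 := by
    rw [Finset.sum_eq_single i (fun b _ hb => by simp [Matrix.conjTranspose_apply, hd b hb])
      (by simp)] at h2
    simpa [Matrix.conjTranspose_apply, Matrix.one_apply] using h2
  have hns : Complex.normSq (U i i) = 1 := by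
    rw [mul_comm, Complex.mul_conj] at h3
    exact_mod_cast h3
  have hsq : ‖U i i‖ ^ 2 = 1 := by rw [Complex.sq_norm, hns]
  nlinarith [norm_nonneg (U i i)]

private lemma tor_to_MU {n N : ℕ} (C : Mat (Fin n))
    (Φ : Mat (Fin n) →ₗ[ℂ] Mat (Fin n)) (hΦ : ∀ X, Φ X = Matrix.hadamard C X)
    (p : Fin N → ℝ) (u : Fin N → Fin n → ℂ) (h : IsToroidalDecomp C p u) :
    IsMixedUnitaryDecomp Φ p (fun k => Matrix.diagonal (u k)) := by
  obtain ⟨hp0, hp1, hmod, hCeq⟩ := h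
  have hCij : ∀ i j, C i j = ∑ k, (p k : ℂ) * (u k i * (starRingEnd ℂ) (u k j)) := by
    intro i j
    rw [hCeq]
    simp [Matrix.sum_apply, Matrix.vecMulVec_apply, Pi.star_apply, mul_assoc]
  refine ⟨hp0, hp1, ?_, ?_⟩
  · intro k
    rw [Matrix.mem_unitaryGroup_iff]
    rw [Matrix.star_eq_conjTranspose, Matrix.diagonal_conjTranspose,
      Matrix.diagonal_mul_diagonal]
    have hone : ∀ i, u k i * star (u k) i = 1 := by
      intro i
      have hns : Complex.normSq (u k i) = 1 := by
        rw [← Complex.sq_norm, hmod k i, one_pow]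
      rw [Pi.star_apply, Complex.star_def, Complex.mul_conj]
      exact_mod_cast hns
    rw [show (fun i => u k i * star (u k) i) = fun _ => (1:ℂ) from funext hone]
    exact Matrix.diagonal_one
  · intro X
    ext i j
    rw [hΦ, Matrix.hadamard_apply, hCij i j]
    rw [Matrix.sum_apply]
    rw [Finset.sum_mul]
    refine Finset.sum_congr rfl fun k _ => ?_
    rw [Matrix.smul_apply, aux_diag_conj]
    simp [smul_eq_mul]
    ring

open scoped Classical in
private lemma MU_to_tor {n N : ℕ} (C : Mat (Fin n))
    (Φ : Mat (Fin n) →ₗ[ℂ] Mat (Fin n)) (hΦ : ∀ X, Φ X = Matrix.hadamard C X)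
    (p : Fin N → ℝ) (U : Fin N → Mat (Fin n)) (h : IsMixedUnitaryDecomp Φ p U) :
    ∃ u : Fin N → Fin n → ℂ, IsToroidalDecomp C p u := by
  obtain ⟨hp0, hp1, hU, hmap⟩ := h
  -- off-diagonal entries of `U k` vanish whenever `p k > 0`
  have hdiag : ∀ k, 0 < p k → ∀ j i, j ≠ i → U k j i = 0 := by
    intro k hpk j i hji
    have h1 := congrFun (congrFun ((hΦ _).symm.trans
      (hmap (Matrix.single i i (1:ℂ)))) j) j
    have hL : Matrix.single i i (1:ℂ) j j = 0 := by
      simp [Matrix.single, Ne.symm hji]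
    have h2 : (0:ℂ) = ∑ l, (p l : ℂ) * (Complex.normSq (U l j i) : ℂ) := by
      simpa [Matrix.hadamard_apply, hL, Matrix.sum_apply, Matrix.smul_apply, aux_conj_std,
        smul_eq_mul, Complex.mul_conj] using h1
    have h3 : ∑ l, p l * Complex.normSq (U l j i) = 0 := by
      have : ((∑ l, p l * Complex.normSq (U l j i) : ℝ) : ℂ) = 0 := by
        push_cast
        exact h2.symm
      exact_mod_cast this
    have h4 := (Finset.sum_eq_zero_iff_of_nonneg (fun l _ =>
      mul_nonneg (hp0 l) (Complex.normSq_nonneg _))).mp h3 k (Finset.mem_univ k)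
    have h5 : Complex.normSq (U k j i) = 0 := by
      rcases mul_eq_zero.mp h4 with h | h
      · exact absurd h (ne_of_gt hpk)
      · exact h
    exact Complex.normSq_eq_zero.mp h5
  set u : Fin N → Fin n → ℂ :=
    fun k => if 0 < p k then (fun i => U k i i) else (fun _ => 1) with hu
  have hUdiag : ∀ k, 0 < p k → U k = Matrix.diagonal (u k) := by
    intro k hpk
    ext a b
    rcases eq_or_ne a b with rfl | hab
    · simp [hu, hpk, Matrix.diagonal_apply_eq]
    · rw [Matrix.diagonal_apply_ne _ hab]
      exact hdiag k hpk a b hab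
  refine ⟨u, hp0, hp1, ?_, ?_⟩
  · intro k i
    by_cases hpk : 0 < p k
    · have := aux_norm_diag (U k) (hU k) i (fun j hj => hdiag k hpk j i hj)
      simpa [hu, hpk] using this
    · simp [hu, hpk]
  · ext i j
    set J : Mat (Fin n) := Matrix.of fun _ _ => (1:ℂ) with hJ
    have h1 := congrFun (congrFun ((hΦ _).symm.trans (hmap J)) i) j
    have h2 : C i j = ∑ k, (p k : ℂ) * ((U k * J * (U k)ᴴ) i j) := by
      simpa [Matrix.hadamard_apply, hJ, Matrix.sum_apply, Matrix.smul_apply, smul_eq_mul]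
        using h1
    rw [h2, Matrix.sum_apply]
    refine Finset.sum_congr rfl fun k _ => ?_
    rw [Matrix.smul_apply]
    by_cases hpk : 0 < p k
    · rw [hUdiag k hpk, aux_diag_conj]
      simp [smul_eq_mul, hJ, Matrix.vecMulVec_apply, Pi.star_apply, Complex.star_def]
    · have hpz : p k = 0 := le_antisymm (not_lt.mp hpk) (hp0 k)
      simp [hpz, smul_eq_mul]

private lemma set_eq {n : ℕ} (C : Mat (Fin n))
    (Φ : Mat (Fin n) →ₗ[ℂ] Mat (Fin n)) (hΦ : ∀ X, Φ X = Matrix.hadamard C X) :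
    {N : ℕ | ∃ (p : Fin N → ℝ) (U : Fin N → Mat (Fin n)), IsMixedUnitaryDecomp Φ p U}
      = {N : ℕ | ∃ (p : Fin N → ℝ) (u : Fin N → Fin n → ℂ), IsToroidalDecomp C p u} := by
  ext N
  constructor
  · rintro ⟨p, U, h⟩
    obtain ⟨u, hu⟩ := MU_to_tor C Φ hΦ p U h
    exact ⟨p, u, hu⟩
  · rintro ⟨p, u, h⟩
    exact ⟨p, _, tor_to_MU C Φ hΦ p u h⟩

/-- For a correlation matrix `C` and the Schur channel
`Φ(X) = C ⊙ X`: `Φ` is mixed unitary with mixed-unitary rank `N` iff `C` is toroidal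
with toroidal rank `N`. -/
theorem stmt10 (n N : ℕ) (hn : 0 < n) (hN : 0 < N)
    (C : Mat (Fin n)) (hC : IsCorrelation C)
    (Φ : Mat (Fin n) →ₗ[ℂ] Mat (Fin n))
    (hΦ : ∀ X, Φ X = Matrix.hadamard C X) :
    (IsMixedUnitary Φ ∧ mixedUnitaryRank Φ = N) ↔
      (IsToroidal C ∧ toroidalRank C = N) := by
  have hset := set_eq C Φ hΦ
  constructor
  · rintro ⟨⟨N', p, U, hd⟩, hrank⟩
    obtain ⟨v, hv⟩ := MU_to_tor C Φ hΦ p U hd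
    refine ⟨⟨N', p, v, hv⟩, ?_⟩
    rw [toroidalRank, ← hset, ← mixedUnitaryRank, hrank]
  · rintro ⟨⟨N', p, v, hv⟩, hrank⟩
    refine ⟨⟨N', p, _, tor_to_MU C Φ hΦ p v hv⟩, ?_⟩
    rw [mixedUnitaryRank, hset, ← toroidalRank, hrank]
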